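/- arXiv:2502.06459 — 4 statements merged into one kernel-verified Lean document; each statement's English description precedes it below -/
import Mathlib

section
/- Let (V, ≤) be a finite partially ordered set and U ⊆ V. The minimum number of chains of V whose union contains U equals the maximum cardinality of an antichain contained in U. -/
set_option linter.unusedSectionVars false
set_option maxHeartbeats 1000000

section helpers
variable {V : Type} [Fintype V] [DecidableEq V] [PartialOrder V]


lemma finset_singleton_isChain (a : V) : IsChain (· ≤ ·) (({a} : Finset V) : Set V) := by
  intro x hx y hy hne
  simp only [Finset.coe_singleton, Set.mem_singleton_iff] at hx hy
  exact absurd (hx.trans hy.symm) hne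

lemma snoc_disjoint {k : ℕ} (C : Fin k → Finset V) (K : Finset V)
    (h1 : ∀ i j : Fin k, i ≠ j → Disjoint (C i) (C j)) (h2 : ∀ i : Fin k, Disjoint (C i) K) :
    ∀ i j : Fin (k + 1), i ≠ j →
      Disjoint ((Fin.snoc C K : Fin (k + 1) → Finset V) i)
        ((Fin.snoc C K : Fin (k + 1) → Finset V) j) := by
  intro i j hij
  rcases Fin.eq_castSucc_or_eq_last i with ⟨i', rfl⟩ | rfl
  · rcases Fin.eq_castSucc_or_eq_last j with ⟨j', rfl⟩ | rfl
    · simp only [Fin.snoc_castSucc]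
      exact h1 i' j' (fun h => hij (by rw [h]))
    · simp only [Fin.snoc_castSucc, Fin.snoc_last]
      exact h2 i'
  · rcases Fin.eq_castSucc_or_eq_last j with ⟨j', rfl⟩ | rfl
    · simp only [Fin.snoc_castSucc, Fin.snoc_last]
      exact (h2 j').symm
    · exact absurd rfl hij

lemma antichain_card_le_of_cover (A : Finset V) (hA : IsAntichain (· ≤ ·) ((A : Finset V) : Set V))
    {m : ℕ} (C : Fin m → Finset V) (hC : ∀ i, IsChain (· ≤ ·) ((C i : Finset V) : Set V))
    (hcov : A ⊆ Finset.univ.biUnion C) : A.card ≤ m := by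
  rcases Nat.eq_zero_or_pos m with hm | hm
  · subst hm
    simp only [Finset.univ_eq_empty, Finset.biUnion_empty, Finset.subset_empty] at hcov
    simp [hcov]
  · classical
    set f : V → Fin m := fun x => if h : ∃ i, x ∈ C i then h.choose else ⟨0, hm⟩ with hf
    have hfmem : ∀ x ∈ A, x ∈ C (f x) := by
      intro x hx
      have hx' := hcov hx
      simp only [Finset.mem_biUnion, Finset.mem_univ, true_and] at hx'
      obtain ⟨i, hi⟩ := hx'
      have h : ∃ i, x ∈ C i := ⟨i, hi⟩
      simp only [hf, dif_pos h]
      exact h.choose_spec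
    have h2 : A.card ≤ (Finset.univ : Finset (Fin m)).card := by
      apply Finset.card_le_card_of_injOn f (fun a _ => Finset.mem_univ _)
      intro x hx y hy hxy
      have hx1 := hfmem x hx; have hy1 := hfmem y hy
      rw [hxy] at hx1
      by_contra hne
      rcases hC (f y) (by exact_mod_cast hx1) (by exact_mod_cast hy1) hne with h1 | h1
      · exact hA (by exact_mod_cast hx) (by exact_mod_cast hy) hne h1
      · exact hA (by exact_mod_cast hy) (by exact_mod_cast hx) (Ne.symm hne) h1
    simpa using h2


lemma chain_exists_max (T : Finset V) (hT : IsChain (· ≤ ·) ((T : Finset V) : Set V))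
    (hne : T.Nonempty) : ∃ m ∈ T, ∀ x ∈ T, x ≤ m := by
  obtain ⟨m, hm, hmax⟩ := T.exists_maximal hne
  refine ⟨m, hm, fun x hx => ?_⟩
  rcases eq_or_ne x m with rfl | h
  · exact le_refl x
  · rcases hT (by exact_mod_cast hx) (by exact_mod_cast hm) h with h1 | h1
    · exact h1
    · exact hmax hx h1


lemma disjointify (S : Finset V) {m : ℕ} (C : Fin m → Finset V)
    (hC : ∀ i, IsChain (· ≤ ·) ((C i : Finset V) : Set V))
    (hcov : S ⊆ Finset.univ.biUnion C) :
    ∃ D : Fin m → Finset V, (∀ i, IsChain (· ≤ ·) ((D i : Finset V) : Set V)) ∧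
      (∀ i, D i ⊆ S) ∧ S ⊆ Finset.univ.biUnion D ∧
      ∀ i j, i ≠ j → Disjoint (D i) (D j) := by
  classical
  refine ⟨fun i => (C i ∩ S).filter (fun x => ∀ j, j < i → x ∉ C j), ?_, ?_, ?_, ?_⟩
  · intro i
    apply IsChain.mono ?_ (hC i)
    intro x hx
    simp only [Finset.coe_filter, Set.mem_setOf_eq, Finset.mem_inter] at hx
    exact_mod_cast hx.1.1
  · intro i x hx
    simp only [Finset.mem_filter, Finset.mem_inter] at hx
    exact hx.1.2
  · intro x hx
    have hx' := hcov hx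
    simp only [Finset.mem_biUnion, Finset.mem_univ, true_and] at hx' ⊢
    have hne : (Finset.univ.filter (fun i => x ∈ C i)).Nonempty := by
      obtain ⟨i, hi⟩ := hx'
      exact ⟨i, by simp [hi]⟩
    set i0 := (Finset.univ.filter (fun i => x ∈ C i)).min' hne with hi0
    have hmem : x ∈ C i0 := by
      have := (Finset.univ.filter (fun i => x ∈ C i)).min'_mem hne
      simpa using this
    refine ⟨i0, ?_⟩
    simp only [Finset.mem_filter, Finset.mem_inter]
    refine ⟨⟨hmem, hx⟩, fun j hj hjC => ?_⟩
    have : i0 ≤ j := Finset.min'_le _ j (by simp [hjC])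
    exact absurd hj (not_lt.mpr this)
  · have hlt : ∀ i j : Fin m, i < j →
        Disjoint ((C i ∩ S).filter (fun x => ∀ l, l < i → x ∉ C l))
          ((C j ∩ S).filter (fun x => ∀ l, l < j → x ∉ C l)) := by
      intro i j hij
      rw [Finset.disjoint_left]
      intro x hx1 hx2
      simp only [Finset.mem_filter, Finset.mem_inter] at hx1 hx2
      exact hx2.2 i hij hx1.1.1
    intro i j hij
    rcases lt_or_gt_of_ne hij with h | h
    · exact hlt i j h
    · exact (hlt j i h).symm


lemma key_dilworth (n : ℕ) (S : Finset V) (hS : S.card ≤ n) :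
    ∃ (k : ℕ) (A : Finset V) (C : Fin k → Finset V),
      A ⊆ S ∧ IsAntichain (· ≤ ·) ((A : Finset V) : Set V) ∧ A.card = k ∧
      (∀ i, IsChain (· ≤ ·) ((C i : Finset V) : Set V)) ∧
      (∀ i, C i ⊆ S) ∧ S ⊆ Finset.univ.biUnion C ∧
      (∀ i j, i ≠ j → Disjoint (C i) (C j)) := by
  classical
  induction n generalizing S with
  | zero =>
    have : S = ∅ := Finset.card_eq_zero.mp (Nat.le_zero.mp hS)
    subst this
    exact ⟨0, ∅, Fin.elim0, Finset.Subset.refl _, by simp [IsAntichain], by simp,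
      fun i => i.elim0, fun i => i.elim0, by simp, fun i => i.elim0⟩
  | succ n ih =>
    rcases S.eq_empty_or_nonempty with rfl | hne
    · exact ⟨0, ∅, Fin.elim0, Finset.Subset.refl _, by simp [IsAntichain], by simp,
        fun i => i.elim0, fun i => i.elim0, by simp, fun i => i.elim0⟩
    obtain ⟨a, haS, hamax⟩ := S.exists_maximal hne
    have haS' : a ∉ S.erase a := Finset.notMem_erase a S
    have hS'card : (S.erase a).card ≤ n := by
      have := Finset.card_erase_of_mem haS; omega
    obtain ⟨k, A', C, hA'S, hA'anti, hA'card, hCchain, hCsub, hCcov, hCdisj⟩ :=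
      ih (S.erase a) hS'card
    rcases Nat.eq_zero_or_pos k with hk | hk
    · -- S.erase a is empty, S = {a}
      subst hk
      have hS'e : S.erase a = ∅ := by
        rw [Finset.eq_empty_iff_forall_notMem]
        intro x hx
        have := hCcov hx
        simp at this
      have hSa : S = {a} := by
        apply Finset.eq_singleton_iff_unique_mem.mpr
        refine ⟨haS, fun x hx => ?_⟩
        by_contra h
        have : x ∈ S.erase a := Finset.mem_erase.mpr ⟨h, hx⟩
        simp [hS'e] at this
      refine ⟨1, {a}, fun _ => ({a} : Finset V), by simp [hSa], ?_, by simp, ?_, by simp [hSa], ?_, ?_⟩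
      · intro x hx y hy hxy
        simp only [Finset.coe_singleton, Set.mem_singleton_iff] at hx hy
        exact absurd (hx.trans hy.symm) hxy
      · intro i
        exact finset_singleton_isChain a
      · intro x hx
        rw [hSa] at hx
        simp only [Finset.mem_singleton] at hx
        exact Finset.mem_biUnion.mpr ⟨0, Finset.mem_univ _, by simp [hx]⟩
      · intro i j hij
        exact absurd (Subsingleton.elim i j) hij
    · -- main case
      set P : Finset V → Prop :=
        fun B => B ⊆ S.erase a ∧ IsAntichain (· ≤ ·) ((B : Finset V) : Set V) ∧ B.card = k
        with hPdef
      have hPA' : P A' := ⟨hA'S, hA'anti, hA'card⟩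
      -- every k-antichain of S.erase a meets every chain
      have hmeet : ∀ B, P B → ∀ i, ∃ x ∈ B, x ∈ C i := by
        intro B hB i
        obtain ⟨hBsub, hBanti, hBcard⟩ := hB
        set g : V → Fin k := fun x => if h : ∃ i, x ∈ C i then h.choose else ⟨0, hk⟩ with hg
        have hgmem : ∀ x ∈ S.erase a, x ∈ C (g x) := by
          intro x hx
          have hx' := hCcov hx
          simp only [Finset.mem_biUnion, Finset.mem_univ, true_and] at hx'
          obtain ⟨j, hj⟩ := hx'
          have h : ∃ i, x ∈ C i := ⟨j, hj⟩
          simp only [hg, dif_pos h]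
          exact h.choose_spec
        have hinj : Set.InjOn g B := by
          intro x hx y hy hxy
          have hx1 := hgmem x (hBsub hx); have hy1 := hgmem y (hBsub hy)
          rw [hxy] at hx1
          by_contra hne2
          rcases hCchain (g y) (by exact_mod_cast hx1) (by exact_mod_cast hy1) hne2 with h1 | h1
          · exact hBanti (by exact_mod_cast hx) (by exact_mod_cast hy) hne2 h1
          · exact hBanti (by exact_mod_cast hy) (by exact_mod_cast hx) (Ne.symm hne2) h1
        have himg : B.image g = Finset.univ := by
          apply Finset.eq_univ_of_card
          rw [Finset.card_image_of_injOn (fun x hx y hy => hinj hx hy), hBcard,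
            Fintype.card_fin]
        have : i ∈ B.image g := by rw [himg]; exact Finset.mem_univ i
        obtain ⟨x, hxB, hgx⟩ := Finset.mem_image.mp this
        exact ⟨x, hxB, hgx ▸ hgmem x (hBsub hxB)⟩
      set T : Fin k → Finset V := fun i => (C i).filter (fun x => ∃ B, P B ∧ x ∈ B) with hT
      have hTsub : ∀ i, T i ⊆ C i := fun i => Finset.filter_subset _ _
      have hTchain : ∀ i, IsChain (· ≤ ·) ((T i : Finset V) : Set V) := by
        intro i
        exact (hCchain i).mono (by exact_mod_cast hTsub i)
      have hTne : ∀ i, (T i).Nonempty := by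
        intro i
        obtain ⟨x, hxA, hxC⟩ := hmeet A' hPA' i
        exact ⟨x, Finset.mem_filter.mpr ⟨hxC, A', hPA', hxA⟩⟩
      choose maxel hmel hmax using fun i => chain_exists_max (T i) (hTchain i) (hTne i)
      have hmelC : ∀ i, maxel i ∈ C i := fun i => hTsub i (hmel i)
      have hmelS' : ∀ i, maxel i ∈ S.erase a := fun i => hCsub i (hmelC i)
      have fact1 : ∀ i j, maxel i ≤ maxel j → maxel i = maxel j := by
        intro i j hle
        obtain ⟨-, B, hB, hmB⟩ := Finset.mem_filter.mp (hmel j)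
        obtain ⟨x, hxB, hxCi⟩ := hmeet B hB i
        have hxTi : x ∈ T i := Finset.mem_filter.mpr ⟨hxCi, B, hB, hxB⟩
        have hx_le : x ≤ maxel i := hmax i x hxTi
        have hxm : x = maxel j := by
          by_contra hne2
          exact hB.2.1 (by exact_mod_cast hxB) (by exact_mod_cast hmB) hne2 (hx_le.trans hle)
        exact le_antisymm hle (hxm ▸ hx_le)
      have hinjm : Function.Injective maxel := by
        intro i j heq
        by_contra hne2
        have h1 : maxel i ∈ C i := hmelC i
        have h2 : maxel i ∈ C j := heq ▸ hmelC j
        exact Finset.disjoint_left.mp (hCdisj i j hne2) h1 h2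
      set A : Finset V := Finset.univ.image maxel with hA
      have hAcard : A.card = k := by
        rw [hA, Finset.card_image_of_injective _ hinjm, Finset.card_univ, Fintype.card_fin]
      have hAsubS' : A ⊆ S.erase a := by
        intro x hx
        obtain ⟨i, -, rfl⟩ := Finset.mem_image.mp hx
        exact hmelS' i
      have hAanti : IsAntichain (· ≤ ·) ((A : Finset V) : Set V) := by
        intro x hx y hy hne2 hle
        simp only [hA, Finset.coe_image, Finset.coe_univ, Set.image_univ, Set.mem_range] at hx hy
        obtain ⟨i, rfl⟩ := hx
        obtain ⟨j, rfl⟩ := hy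
        exact hne2 (fact1 i j hle)
      by_cases hcase : ∃ i, maxel i ≤ a
      · -- case 2b: shrink
        obtain ⟨i0, hi0⟩ := hcase
        set K : Finset V := insert a ((C i0).filter (fun x => x ≤ maxel i0)) with hK
        have haK : a ∈ K := Finset.mem_insert_self a _
        have hKchain : IsChain (· ≤ ·) ((K : Finset V) : Set V) := by
          intro x hx y hy hne2
          simp only [hK, Finset.coe_insert, Set.mem_insert_iff, Finset.mem_coe,
            Finset.mem_filter] at hx hy
          rcases hx with rfl | ⟨hxC, hxle⟩
          · rcases hy with rfl | ⟨hyC, hyle⟩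
            · exact absurd rfl hne2
            · exact Or.inr (hyle.trans hi0)
          · rcases hy with rfl | ⟨hyC, hyle⟩
            · exact Or.inl (hxle.trans hi0)
            · exact hCchain i0 (by exact_mod_cast hxC) (by exact_mod_cast hyC) hne2
        have hKsub : K ⊆ S := by
          rw [hK, Finset.insert_subset_iff]
          exact ⟨haS, fun x hx =>
            Finset.erase_subset a S (hCsub i0 (Finset.filter_subset _ _ hx))⟩
        have hsub'' : S \ K ⊆ S.erase a := by
          intro x hx
          rw [Finset.mem_sdiff] at hx
          exact Finset.mem_erase.mpr ⟨fun h => hx.2 (h ▸ haK), hx.1⟩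
        obtain ⟨k'', A'', C'', hA''S, hA''anti, hA''card, hC''chain, hC''sub, hC''cov, hC''disj⟩ :=
          ih (S \ K) (le_trans (Finset.card_le_card hsub'') hS'card)
        have hklt : k'' < k := by
          by_contra h
          push_neg at h
          obtain ⟨B, hBsub, hBcard⟩ :=
            Finset.exists_subset_card_eq (show k ≤ A''.card by rw [hA''card]; exact h)
          have hBanti : IsAntichain (· ≤ ·) ((B : Finset V) : Set V) :=
            hA''anti.subset (by exact_mod_cast hBsub)
          have hPB : P B := ⟨(hBsub.trans hA''S).trans hsub'', hBanti, hBcard⟩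
          obtain ⟨x, hxB, hxC⟩ := hmeet B hPB i0
          have hxT : x ∈ T i0 := Finset.mem_filter.mpr ⟨hxC, B, hPB, hxB⟩
          have hxK : x ∈ K := Finset.mem_insert_of_mem
            (Finset.mem_filter.mpr ⟨hxC, hmax i0 x hxT⟩)
          have hxS'' : x ∈ S \ K := hA''S (hBsub hxB)
          exact (Finset.mem_sdiff.mp hxS'').2 hxK
        set C2 : Fin (k'' + 1) → Finset V := Fin.snoc C'' K with hC2
        have hC2chain : ∀ i, IsChain (· ≤ ·) ((C2 i : Finset V) : Set V) := by
          intro i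
          refine Fin.lastCases ?_ ?_ i
          · simp only [hC2, Fin.snoc_last]; exact hKchain
          · intro j; simp only [hC2, Fin.snoc_castSucc]; exact hC''chain j
        have hC2sub : ∀ i, C2 i ⊆ S := by
          intro i
          refine Fin.lastCases ?_ ?_ i
          · simp only [hC2, Fin.snoc_last]; exact hKsub
          · intro j; simp only [hC2, Fin.snoc_castSucc]
            exact (hC''sub j).trans (Finset.sdiff_subset)
        have hC2cov : S ⊆ Finset.univ.biUnion C2 := by
          intro x hx
          rw [Finset.mem_biUnion]
          by_cases hxK : x ∈ K
          · exact ⟨Fin.last k'', Finset.mem_univ _, by simp [hC2, Fin.snoc_last, hxK]⟩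
          · have : x ∈ S \ K := Finset.mem_sdiff.mpr ⟨hx, hxK⟩
            have := hC''cov this
            rw [Finset.mem_biUnion] at this
            obtain ⟨j, -, hj⟩ := this
            exact ⟨j.castSucc, Finset.mem_univ _, by simp [hC2, Fin.snoc_castSucc, hj]⟩
        have hC2disj : ∀ i j, i ≠ j → Disjoint (C2 i) (C2 j) := by
          apply snoc_disjoint C'' K hC''disj
          intro j
          rw [Finset.disjoint_left]
          intro x hx
          exact fun hxK => (Finset.mem_sdiff.mp (hC''sub j hx)).2 hxK
        have hkeq : k = k'' + 1 := by
          have hle1 : k ≤ k'' + 1 := by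
            rw [← hA'card]
            exact antichain_card_le_of_cover A' hA'anti C2 hC2chain
              ((hA'S.trans (Finset.erase_subset a S)).trans hC2cov)
          omega
        exact ⟨k'' + 1, A', C2, (hA'S.trans (Finset.erase_subset a S)), hA'anti,
          by rw [hA'card, hkeq], hC2chain, hC2sub, hC2cov, hC2disj⟩
      · -- case 2a: extend antichain with a
        push_neg at hcase
        have hnot2 : ∀ i, ¬ a ≤ maxel i := by
          intro i h
          have hne2 : a ≠ maxel i := fun hh => haS' (hh ▸ hmelS' i)
          exact hne2 (le_antisymm h (hamax (Finset.erase_subset a S (hmelS' i)) h))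
        have haA : a ∉ A := fun h => haS' (hAsubS' h)
        set A2 : Finset V := insert a A with hA2
        have hA2card : A2.card = k + 1 := by
          rw [hA2, Finset.card_insert_of_notMem haA, hAcard]
        have hA2anti : IsAntichain (· ≤ ·) ((A2 : Finset V) : Set V) := by
          intro x hx y hy hne2 hle
          simp only [hA2, Finset.coe_insert, Set.mem_insert_iff, Finset.mem_coe] at hx hy
          rcases hx with rfl | hx
          · rcases hy with rfl | hy
            · exact hne2 rfl
            · obtain ⟨i, -, rfl⟩ := Finset.mem_image.mp hy
              exact hnot2 i hle
          · rcases hy with rfl | hy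
            · obtain ⟨i, -, rfl⟩ := Finset.mem_image.mp hx
              exact hcase i hle
            · exact hAanti (by exact_mod_cast hx) (by exact_mod_cast hy) hne2 hle
        set C2 : Fin (k + 1) → Finset V := Fin.snoc C {a} with hC2
        refine ⟨k + 1, A2, C2, ?_, hA2anti, hA2card, ?_, ?_, ?_, ?_⟩
        · rw [hA2, Finset.insert_subset_iff]
          exact ⟨haS, hAsubS'.trans (Finset.erase_subset a S)⟩
        · intro i
          refine Fin.lastCases ?_ ?_ i
          · simp only [hC2, Fin.snoc_last]
            exact finset_singleton_isChain a
          · intro j; simp only [hC2, Fin.snoc_castSucc]; exact hCchain j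
        · intro i
          refine Fin.lastCases ?_ ?_ i
          · simp only [hC2, Fin.snoc_last, Finset.singleton_subset_iff]; exact haS
          · intro j; simp only [hC2, Fin.snoc_castSucc]
            exact (hCsub j).trans (Finset.erase_subset a S)
        · intro x hx
          rw [Finset.mem_biUnion]
          by_cases hxa : x = a
          · exact ⟨Fin.last k, Finset.mem_univ _, by simp [hC2, Fin.snoc_last, hxa]⟩
          · have : x ∈ S.erase a := Finset.mem_erase.mpr ⟨hxa, hx⟩
            have := hCcov this
            rw [Finset.mem_biUnion] at this
            obtain ⟨j, -, hj⟩ := this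
            exact ⟨j.castSucc, Finset.mem_univ _, by simp [hC2, Fin.snoc_castSucc, hj]⟩
        · apply snoc_disjoint C {a} hCdisj
          intro j
          rw [Finset.disjoint_right]
          intro x hx
          simp only [Finset.mem_singleton] at hx
          subst hx
          exact fun hxC => haS' (hCsub j hxC)

end helpers

/-- **Subset version of Dilworth's theorem.** For a finite poset `V` and a subset
`U ⊆ V`, the minimum number of chains of `V` whose union contains `U` equals the maximum
cardinality of an antichain contained in `U`. -/
theorem subset_dilworth (V : Type) [Fintype V] [DecidableEq V] [PartialOrder V]
    (U : Finset V) :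
    sInf {m : ℕ | ∃ C : Fin m → Finset V,
        (∀ i, IsChain (· ≤ ·) ((C i : Finset V) : Set V)) ∧
        U ⊆ Finset.univ.biUnion C} =
    sSup {n : ℕ | ∃ A : Finset V, A ⊆ U ∧
        IsAntichain (· ≤ ·) ((A : Finset V) : Set V) ∧ n = A.card} := by
  classical
  obtain ⟨k, A, C, hAU, hAanti, hAcard, hCchain, hCsub, hCcov, -⟩ :=
    key_dilworth U.card U le_rfl
  have hmemInf : k ∈ {m : ℕ | ∃ C : Fin m → Finset V,
      (∀ i, IsChain (· ≤ ·) ((C i : Finset V) : Set V)) ∧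
      U ⊆ Finset.univ.biUnion C} := ⟨C, hCchain, hCcov⟩
  have hmemSup : k ∈ {n : ℕ | ∃ A : Finset V, A ⊆ U ∧
      IsAntichain (· ≤ ·) ((A : Finset V) : Set V) ∧ n = A.card} :=
    ⟨A, hAU, hAanti, hAcard.symm⟩
  have hbdd : BddAbove {n : ℕ | ∃ A : Finset V, A ⊆ U ∧
      IsAntichain (· ≤ ·) ((A : Finset V) : Set V) ∧ n = A.card} := by
    refine ⟨U.card, fun n hn => ?_⟩
    obtain ⟨B, hBU, -, rfl⟩ := hn
    exact Finset.card_le_card hBU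
  apply le_antisymm
  · exact le_trans (Nat.sInf_le hmemInf) (le_csSup hbdd hmemSup)
  · apply csSup_le ⟨k, hmemSup⟩
    intro n hn
    obtain ⟨B, hBU, hBanti, rfl⟩ := hn
    have hne : {m : ℕ | ∃ C : Fin m → Finset V,
        (∀ i, IsChain (· ≤ ·) ((C i : Finset V) : Set V)) ∧
        U ⊆ Finset.univ.biUnion C}.Nonempty := ⟨k, hmemInf⟩
    obtain ⟨C2, hC2chain, hC2cov⟩ := Nat.sInf_mem hne
    exact antichain_card_le_of_cover B hBanti C2 hC2chain (hBU.trans hC2cov)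
end

section
/- There exists a finite partially ordered set (V, ≤) with exactly 16 elements such that β_2 = 16 (two disjoint chains cover all of V), and there is a greedy chain sequence C_1, C_2 with |C_1| = 8 and |C_2| = 4, so that the two greedy chains cover exactly 12 = (3/4)·β_2 elements. -/
/-- A greedy chain sequence: pairwise disjoint chains `C 0, …, C (m-1)` such that each
`C i` has maximum cardinality among all chains contained in the complement of the
previously chosen chains. -/
def GreedyChainSeq (V : Type) [DecidableEq V] [PartialOrder V]
    {m : ℕ} (C : Fin m → Finset V) : Prop :=
  (∀ i, IsChain (· ≤ ·) ((C i : Finset V) : Set V)) ∧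
  (∀ i j, i ≠ j → Disjoint (C i) (C j)) ∧
  (∀ (i : Fin m) (D : Finset V), IsChain (· ≤ ·) ((D : Finset V) : Set V) →
    (∀ v ∈ D, ∀ j, j < i → v ∉ C j) → D.card ≤ (C i).card)

/-- `β_k`: the maximum cardinality of the union of `k` pairwise disjoint chains. -/
noncomputable def betaVal (V : Type) [Fintype V] [DecidableEq V] [PartialOrder V]
    (k : ℕ) : ℕ :=
  sSup {n : ℕ | ∃ C : Fin k → Finset V,
    (∀ i, IsChain (· ≤ ·) ((C i : Finset V) : Set V)) ∧
    (∀ i j, i ≠ j → Disjoint (C i) (C j)) ∧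
    n = (Finset.univ.biUnion C).card}

def GreedyChainsExample2 (V : Type) [Fintype V] [DecidableEq V] [PartialOrder V] : Prop :=
  Fintype.card V = 16 ∧ betaVal V 2 = 16 ∧
  ∃ C : Fin 2 → Finset V, GreedyChainSeq V C ∧
    (C 0).card = 8 ∧ (C 1).card = 4 ∧ (Finset.univ.biUnion C).card = 12

-- Construction

def V16 : Type := Fin 2 × Fin 8

instance : DecidableEq V16 := inferInstanceAs (DecidableEq (Fin 2 × Fin 8))
instance : Fintype V16 := inferInstanceAs (Fintype (Fin 2 × Fin 8))

def v16le (x y : Fin 2 × Fin 8) : Prop :=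
  (x.1 = y.1 ∧ x.2 ≤ y.2) ∨ (x.1 = 1 ∧ y.1 = 0 ∧ x.2.val < 4 ∧ 4 ≤ y.2.val)

instance v16dec (x y : Fin 2 × Fin 8) : Decidable (v16le x y) := by
  unfold v16le; infer_instance

lemma v16trans : ∀ x y z : Fin 2 × Fin 8, v16le x y → v16le y z → v16le x z := by decide
lemma v16antisymm : ∀ x y : Fin 2 × Fin 8, v16le x y → v16le y x → x = y := by decide

instance : PartialOrder V16 where
  le x y := v16le x y
  le_refl x := Or.inl ⟨rfl, le_refl _⟩
  le_trans := v16trans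
  le_antisymm := v16antisymm

instance : DecidableRel (α := V16) (· ≤ ·) := fun x y => v16dec x y

def pr2 (x : V16) : Fin 8 := x.2
def pr2m (x : V16) : Fin 4 := ⟨(pr2 x).val % 4, Nat.mod_lt _ (by norm_num)⟩

def C0 : Finset V16 := Finset.univ.filter
  (fun x : Fin 2 × Fin 8 => (x.1 = 1 ∧ x.2.val < 4) ∨ (x.1 = 0 ∧ 4 ≤ x.2.val))
def C1 : Finset V16 := Finset.univ.filter
  (fun x : Fin 2 × Fin 8 => x.1 = 0 ∧ x.2.val < 4)
def A0 : Finset V16 := Finset.univ.filter (fun x : Fin 2 × Fin 8 => x.1 = 0)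
def A1 : Finset V16 := Finset.univ.filter (fun x : Fin 2 × Fin 8 => x.1 = 1)

lemma key1 : ∀ x y : V16, x ≤ y → pr2 x = pr2 y → x = y := by decide
lemma key2 : ∀ x y : V16, x ≤ y → x ∉ C0 → y ∉ C0 → pr2m x = pr2m y → x = y := by decide

lemma chain_le_8 (D : Finset V16) (h : IsChain (· ≤ ·) ((D : Finset V16) : Set V16)) :
    D.card ≤ 8 := by
  have := Finset.card_le_card_of_injOn pr2 (fun a _ => Finset.mem_univ _)
    (s := D) (t := Finset.univ) ?_
  · simpa using this
  · intro x hx y hy hxy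
    by_cases hne : x = y
    · exact hne
    · rcases h (Finset.mem_coe.mpr hx) (Finset.mem_coe.mpr hy) hne with hle | hle
      · exact key1 x y hle hxy
      · exact (key1 y x hle hxy.symm).symm

lemma chain_le_4 (D : Finset V16) (h : IsChain (· ≤ ·) ((D : Finset V16) : Set V16))
    (hd : ∀ v ∈ D, v ∉ C0) : D.card ≤ 4 := by
  have := Finset.card_le_card_of_injOn pr2m (fun a _ => Finset.mem_univ _)
    (s := D) (t := Finset.univ) ?_
  · simpa using this
  · intro x hx y hy hxy
    by_cases hne : x = y
    · exact hne
    · rcases h (Finset.mem_coe.mpr hx) (Finset.mem_coe.mpr hy) hne with hle | hle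
      · exact key2 x y hle (hd x hx) (hd y hy) hxy
      · exact (key2 y x hle (hd y hy) (hd x hx) hxy.symm).symm

lemma chain_of_pred (s : Finset V16)
    (hs : ∀ x ∈ s, ∀ y ∈ s, x ≠ y → x ≤ y ∨ y ≤ x) :
    IsChain (· ≤ ·) ((s : Finset V16) : Set V16) := by
  intro x hx y hy hne
  exact hs x (Finset.mem_coe.mp hx) y (Finset.mem_coe.mp hy) hne

lemma hC0chain : IsChain (· ≤ ·) ((C0 : Finset V16) : Set V16) :=
  chain_of_pred C0 (by decide)
lemma hC1chain : IsChain (· ≤ ·) ((C1 : Finset V16) : Set V16) :=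
  chain_of_pred C1 (by decide)
lemma hA0chain : IsChain (· ≤ ·) ((A0 : Finset V16) : Set V16) :=
  chain_of_pred A0 (by decide)
lemma hA1chain : IsChain (· ≤ ·) ((A1 : Finset V16) : Set V16) :=
  chain_of_pred A1 (by decide)

lemma beta16 : betaVal V16 2 = 16 := by
  have hmem : 16 ∈ {n : ℕ | ∃ C : Fin 2 → Finset V16,
      (∀ i, IsChain (· ≤ ·) ((C i : Finset V16) : Set V16)) ∧
      (∀ i j, i ≠ j → Disjoint (C i) (C j)) ∧
      n = (Finset.univ.biUnion C).card} := by
    refine ⟨fun i => if i = 0 then A0 else A1, ?_, ?_, ?_⟩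
    · intro i
      fin_cases i
      · simpa using hA0chain
      · simpa using hA1chain
    · intro i j hij
      fin_cases i <;> fin_cases j <;> simp_all <;> decide
    · decide
  have hub : ∀ n ∈ {n : ℕ | ∃ C : Fin 2 → Finset V16,
      (∀ i, IsChain (· ≤ ·) ((C i : Finset V16) : Set V16)) ∧
      (∀ i j, i ≠ j → Disjoint (C i) (C j)) ∧
      n = (Finset.univ.biUnion C).card}, n ≤ 16 := by
    rintro n ⟨C, -, -, rfl⟩
    exact le_trans (Finset.card_le_univ _) (by decide)
  exact le_antisymm (csSup_le ⟨16, hmem⟩ hub) (le_csSup ⟨16, hub⟩ hmem)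

/-- There is a 16-element finite poset with `β_2 = 16` admitting a greedy chain sequence
`C_1, C_2` with `|C_1| = 8` and `|C_2| = 4`, thus covering exactly `12 = (3/4)·β_2`
elements. -/
theorem greedy_chains_example_k2 :
    ∃ (V : Type) (f : Fintype V) (d : DecidableEq V) (p : PartialOrder V),
      @GreedyChainsExample2 V f d p := by
  refine ⟨V16, inferInstance, inferInstance, inferInstance, ?_, ?_, ?_⟩
  · decide
  · exact beta16
  · refine ⟨fun i => if i = 0 then C0 else C1, ⟨?_, ?_, ?_⟩, ?_, ?_, ?_⟩
    · intro i
      fin_cases i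
      · simpa using hC0chain
      · simpa using hC1chain
    · intro i j hij
      fin_cases i <;> fin_cases j <;> simp_all <;> decide
    · intro i D hD hprev
      fin_cases i
      · have : D.card ≤ 8 := chain_le_8 D hD
        simpa using le_trans this (by decide)
      · have hd : ∀ v ∈ D, v ∉ C0 := by
          intro v hv hvC0
          have := hprev v hv 0 (by decide)
          simp at this
          exact this hvC0
        have : D.card ≤ 4 := chain_le_4 D hD hd
        simpa using le_trans this (by decide)
    · simp; decide
    · simp; decide
    · decide
end

section
/- Let (V, ≤) be a finite partially ordered set and k a positive integer. Let C_1, …, C_m be a greedy chain sequence such that |C_i| > k for every i ≤ m and such that every chain contained in V ∖ (C_1 ∪ … ∪ C_m) has cardinality at most k. Then |V ∖ (C_1 ∪ … ∪ C_m)| + k·m ≤ H_{|V|} · α_k, where H_n = Σ_{j=1}^{n} 1/j is the n-th harmonic number; that is, the chain partition formed by C_1, …, C_m together with singletons for the remaining elements has k-norm at most H_{|V|} times the minimum k-norm α_k of a chain partition. -/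
/-- `α_k`: the maximum cardinality of the union of `k` pairwise disjoint antichains,
which by Greene–Kleitman equals the minimum `k`-norm of a chain partition. -/
noncomputable def alphaVal (V : Type) [Fintype V] [DecidableEq V] [PartialOrder V]
    (k : ℕ) : ℕ :=
  sSup {n : ℕ | ∃ A : Fin k → Finset V,
    (∀ i, IsAntichain (· ≤ ·) ((A i : Finset V) : Set V)) ∧
    (∀ i j, i ≠ j → Disjoint (A i) (A j)) ∧
    n = (Finset.univ.biUnion A).card}


open Finset

section AuxGreedyHarmonic
section
variable {V : Type} [Fintype V] [DecidableEq V] [PartialOrder V]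

open scoped Classical in
/-- max cardinality of a chain inside `U` with top element `x`. -/
noncomputable def chainHt (U : Finset V) (x : V) : ℕ :=
  Finset.sup (U.powerset.filter
    (fun s : Finset V => IsChain (· ≤ ·) (s : Set V) ∧ x ∈ s ∧ ∀ y ∈ s, y ≤ x)) Finset.card

lemma chainHt_pos (U : Finset V) {x : V} (hx : x ∈ U) : 1 ≤ chainHt U x := by
  classical
  have : ({x} : Finset V) ∈ U.powerset.filter
      (fun s : Finset V => IsChain (· ≤ ·) (s : Set V) ∧ x ∈ s ∧ ∀ y ∈ s, y ≤ x) := by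
    simp [Finset.mem_filter, Finset.mem_powerset, hx, Set.Subsingleton.isChain]
  calc 1 = ({x} : Finset V).card := by simp
  _ ≤ _ := Finset.le_sup (f := Finset.card) this

lemma chainHt_le {U : Finset V} {ℓ : ℕ}
    (h : ∀ D : Finset V, IsChain (· ≤ ·) (D : Set V) → D ⊆ U → D.card ≤ ℓ) (x : V) :
    chainHt U x ≤ ℓ := by
  classical
  apply Finset.sup_le
  intro s hs
  simp only [Finset.mem_filter, Finset.mem_powerset] at hs
  exact h s hs.2.1 hs.1

lemma chainHt_lt {U : Finset V} {x y : V} (hx : x ∈ U) (hy : y ∈ U) (hxy : x < y) :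
    chainHt U x < chainHt U y := by
  classical
  obtain ⟨s, hs, hcard⟩ := Finset.exists_mem_eq_sup
    (U.powerset.filter (fun s : Finset V => IsChain (· ≤ ·) (s : Set V) ∧ x ∈ s ∧ ∀ y ∈ s, y ≤ x))
    ⟨{x}, by simp [Finset.mem_filter, Finset.mem_powerset, hx, Set.Subsingleton.isChain]⟩
    Finset.card
  simp only [Finset.mem_filter, Finset.mem_powerset] at hs
  obtain ⟨hsU, hchain, hxs, htop⟩ := hs
  have hyns : y ∉ s := fun h => absurd (htop y h) (not_le_of_gt hxy)
  have hins : insert y s ∈ U.powerset.filter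
      (fun s : Finset V => IsChain (· ≤ ·) (s : Set V) ∧ y ∈ s ∧ ∀ z ∈ s, z ≤ y) := by
    simp only [Finset.mem_filter, Finset.mem_powerset]
    refine ⟨Finset.insert_subset hy hsU, ?_, Finset.mem_insert_self _ _, ?_⟩
    · rw [Finset.coe_insert]
      apply hchain.insert
      intro z hz _
      exact Or.inr ((htop z hz).trans hxy.le)
    · intro z hz
      rcases Finset.mem_insert.1 hz with rfl | hz
      · exact le_rfl
      · exact (htop z hz).trans hxy.le
  calc chainHt U x = s.card := hcard
  _ < (insert y s).card := by rw [Finset.card_insert_of_notMem hyns]; omega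
  _ ≤ chainHt U y := Finset.le_sup (f := Finset.card) hins
end

lemma top_k_selection (f : ℕ → ℕ) (n k : ℕ) (hk : k ≤ n) :
    ∃ S ⊆ Finset.range n, S.card = k ∧
      k * ∑ j ∈ Finset.range n, f j ≤ n * ∑ j ∈ S, f j := by
  have hne : ((Finset.range n).powersetCard k).Nonempty := by
    obtain ⟨t, ht, htc⟩ := Finset.exists_subset_card_eq (by simpa using hk :
      k ≤ (Finset.range n).card)
    exact ⟨t, Finset.mem_powersetCard.2 ⟨ht, htc⟩⟩
  obtain ⟨S, hSmem, hSmax⟩ := Finset.exists_max_image _ (fun S => ∑ j ∈ S, f j) hne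
  rw [Finset.mem_powersetCard] at hSmem
  obtain ⟨hSsub, hScard⟩ := hSmem
  refine ⟨S, hSsub, hScard, ?_⟩
  set T := Finset.range n \ S with hT
  -- swap property
  have hswap : ∀ j ∈ S, ∀ j' ∈ T, f j' ≤ f j := by
    intro j hj j' hj'
    by_contra hlt
    push_neg at hlt
    have hj'S : j' ∉ S := (Finset.mem_sdiff.1 hj').2
    have hj'r : j' ∈ Finset.range n := (Finset.mem_sdiff.1 hj').1
    set S' := insert j' (S.erase j) with hS'
    have hj'e : j' ∉ S.erase j := fun h => hj'S (Finset.mem_of_mem_erase h)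
    have hkpos : 0 < k := hScard ▸ Finset.card_pos.2 ⟨j, hj⟩
    have hS'card : S'.card = k := by
      rw [hS', Finset.card_insert_of_notMem hj'e, Finset.card_erase_of_mem hj, hScard]
      omega
    have hS'sub : S' ⊆ Finset.range n := by
      intro a ha
      rcases Finset.mem_insert.1 ha with rfl | ha
      · exact hj'r
      · exact hSsub (Finset.mem_of_mem_erase ha)
    have hsum : ∑ j'' ∈ S, f j'' < ∑ j'' ∈ S', f j'' := by
      rw [hS', Finset.sum_insert hj'e]
      have := Finset.add_sum_erase S f hj
      omega
    exact absurd (hSmax S' (Finset.mem_powersetCard.2 ⟨hS'sub, hS'card⟩)) (by omega)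
  have hTS : ∑ j ∈ S, ∑ j' ∈ T, f j' ≤ ∑ j ∈ S, ∑ j' ∈ T, f j :=
    Finset.sum_le_sum (fun j hj => Finset.sum_le_sum (fun j' hj' => hswap j hj j' hj'))
  have h1 : ∑ j ∈ S, ∑ j' ∈ T, f j' = k * ∑ j' ∈ T, f j' := by
    rw [Finset.sum_const, smul_eq_mul, hScard]
  have h2 : ∀ j, ∑ _j' ∈ T, f j = T.card * f j := by
    intro j; rw [Finset.sum_const, smul_eq_mul]
  have h3 : ∑ j ∈ S, ∑ _j' ∈ T, f j = T.card * ∑ j ∈ S, f j := by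
    simp_rw [h2]; rw [← Finset.mul_sum]
  have hcards : S.card + T.card = n := by
    rw [hT, Finset.card_sdiff_of_subset hSsub, Finset.card_range]; omega
  have hsplit : ∑ j ∈ Finset.range n, f j = ∑ j ∈ S, f j + ∑ j ∈ T, f j := by
    rw [hT]
    have := Finset.sum_sdiff (f := f) hSsub
    omega
  calc k * ∑ j ∈ Finset.range n, f j = k * ∑ j ∈ S, f j + k * ∑ j ∈ T, f j := by
        rw [hsplit]; ring
  _ ≤ k * ∑ j ∈ S, f j + T.card * ∑ j ∈ S, f j := by
        have := hTS; rw [h1, h3] at this; omega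
  _ = n * ∑ j ∈ S, f j := by rw [← hcards, hScard]; ring



section
variable {V : Type} [Fintype V] [DecidableEq V] [PartialOrder V]

lemma alphaVal_bddAbove (k : ℕ) : BddAbove {n : ℕ | ∃ A : Fin k → Finset V,
    (∀ i, IsAntichain (· ≤ ·) ((A i : Finset V) : Set V)) ∧
    (∀ i j, i ≠ j → Disjoint (A i) (A j)) ∧
    n = (Finset.univ.biUnion A).card} := by
  refine ⟨Fintype.card V, fun n hn => ?_⟩
  obtain ⟨A, _, _, rfl⟩ := hn
  exact Finset.card_le_univ _

lemma mirsky_bound (U : Finset V) (k ℓ : ℕ) (hk : 0 < k) (hkℓ : k ≤ ℓ)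
    (hchain : ∀ D : Finset V, IsChain (· ≤ ·) (D : Set V) → D ⊆ U → D.card ≤ ℓ) :
    k * U.card ≤ ℓ * alphaVal V k := by
  classical
  set f : ℕ → ℕ := fun j => (U.filter (fun x => chainHt U x = j + 1)).card with hf
  -- the levels partition U
  have hcover : U = (Finset.range ℓ).biUnion (fun j => U.filter (fun x => chainHt U x = j + 1)) := by
    ext x
    simp only [Finset.mem_biUnion, Finset.mem_filter, Finset.mem_range]
    constructor
    · intro hx
      refine ⟨chainHt U x - 1, ?_, hx, ?_⟩
      · have h1 := chainHt_pos U hx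
        have h2 := chainHt_le hchain x
        omega
      · have h1 := chainHt_pos U hx
        omega
    · rintro ⟨j, _, hx, _⟩; exact hx
  have hsumU : ∑ j ∈ Finset.range ℓ, f j = U.card := by
    rw [hcover, Finset.card_biUnion]
    intro a _ b _ hab
    rw [Function.onFun, Finset.disjoint_left]
    intro x hx hx'
    simp only [Finset.mem_filter] at hx hx'
    omega
  obtain ⟨S, hSsub, hScard, hSsum⟩ := top_k_selection f ℓ k hkℓ
  -- build the k antichains
  let e := S.orderIsoOfFin hScard
  set A : Fin k → Finset V := fun i => U.filter (fun x => chainHt U x = (e i : ℕ) + 1) with hA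
  have hanti : ∀ i, IsAntichain (· ≤ ·) ((A i : Finset V) : Set V) := by
    intro i a ha b hb hab hle
    simp only [hA, Finset.coe_filter, Set.mem_setOf_eq] at ha hb
    have : a < b := lt_of_le_of_ne hle hab
    have := chainHt_lt ha.1 hb.1 this
    omega
  have hdisj : ∀ i j, i ≠ j → Disjoint (A i) (A j) := by
    intro i j hij
    rw [Finset.disjoint_left]
    intro x hx hx'
    simp only [hA, Finset.mem_filter] at hx hx'
    have : (e i : ℕ) = (e j : ℕ) := by omega
    exact hij (e.injective (Subtype.ext this))
  have hmem : (Finset.univ.biUnion A).card ∈ {n : ℕ | ∃ A : Fin k → Finset V,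
      (∀ i, IsAntichain (· ≤ ·) ((A i : Finset V) : Set V)) ∧
      (∀ i j, i ≠ j → Disjoint (A i) (A j)) ∧
      n = (Finset.univ.biUnion A).card} := ⟨A, hanti, hdisj, rfl⟩
  have halpha : (Finset.univ.biUnion A).card ≤ alphaVal V k :=
    le_csSup (alphaVal_bddAbove k) hmem
  -- the union has card ∑ j ∈ S, f j
  have hcard : (Finset.univ.biUnion A).card = ∑ j ∈ S, f j := by
    rw [Finset.card_biUnion (fun i _ j _ hij => hdisj i j hij)]
    have : ∀ i : Fin k, (A i).card = f (e i : ℕ) := fun i => rfl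
    simp_rw [this]
    rw [← Finset.sum_attach S f]
    exact (Equiv.sum_comp e.toEquiv (fun j => f (j : ℕ))).symm ▸ rfl
  calc k * U.card = k * ∑ j ∈ Finset.range ℓ, f j := by rw [hsumU]
  _ ≤ ℓ * ∑ j ∈ S, f j := hSsum
  _ ≤ ℓ * alphaVal V k := Nat.mul_le_mul_left ℓ (hcard ▸ halpha)
end

section
-- harmonic helper lemmas
lemma H_diff (a b : ℕ) (hab : a ≤ b) (hb : 0 < b) :
    ((b - a : ℕ) : ℚ) / (b : ℚ) ≤
      (∑ j ∈ Finset.range b, (1:ℚ)/((j:ℚ)+1)) - (∑ j ∈ Finset.range a, (1:ℚ)/((j:ℚ)+1)) := by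
  rw [← Finset.sum_Ico_eq_sub _ hab]
  have hterm : ∀ j ∈ Finset.Ico a b, (1:ℚ)/(b:ℚ) ≤ 1/((j:ℚ)+1) := by
    intro j hj
    have hjb : j < b := (Finset.mem_Ico.1 hj).2
    apply one_div_le_one_div_of_le
    · positivity
    · push_cast; exact_mod_cast Nat.succ_le_of_lt hjb
  calc ((b - a : ℕ) : ℚ) / (b : ℚ) = ∑ _j ∈ Finset.Ico a b, (1:ℚ)/(b:ℚ) := by
        rw [Finset.sum_const, Nat.card_Ico, nsmul_eq_mul, mul_one_div]
  _ ≤ _ := Finset.sum_le_sum hterm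

lemma singletons_le (r : ℕ) (α' : ℚ) (hr : (r:ℚ) ≤ α') :
    (r:ℚ) ≤ α' * ∑ j ∈ Finset.range r, (1:ℚ)/((j:ℚ)+1) := by
  rw [Finset.mul_sum]
  calc (r:ℚ) = ∑ _j ∈ Finset.range r, (1:ℚ) := by simp
  _ ≤ ∑ j ∈ Finset.range r, α' * ((1:ℚ)/((j:ℚ)+1)) := by
      apply Finset.sum_le_sum
      intro j hj
      have hjr : j < r := Finset.mem_range.1 hj
      rw [mul_one_div, le_div_iff₀ (by positivity), one_mul]
      have : ((j:ℚ)+1) ≤ (r:ℚ) := by exact_mod_cast Nat.succ_le_of_lt hjr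
      exact this.trans hr
end

/-- **Harmonic bound for greedy chains.** Let `C 0, …, C (m-1)` be a greedy chain
sequence with `|C i| > k` for all `i`, such that every chain in the set of still
uncovered elements has cardinality at most `k`. Then the `k`-norm of the chain partition
formed by the `C i` together with singletons for the remaining elements, that is
`|V \ ⋃ C| + k·m`, is at most `H_{|V|} · α_k`. -/
theorem greedy_chain_partition_harmonic_bound (V : Type) [Fintype V] [DecidableEq V]
    [PartialOrder V] (k : ℕ) (hk : 0 < k) (m : ℕ) (C : Fin m → Finset V)
    (hgreedy : GreedyChainSeq V C)
    (hbig : ∀ i, k < (C i).card)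
    (hstop : ∀ D : Finset V, IsChain (· ≤ ·) ((D : Finset V) : Set V) →
      (∀ v ∈ D, ∀ j, v ∉ C j) → D.card ≤ k) :
    (((Finset.univ \ Finset.univ.biUnion C).card + k * m : ℕ) : ℚ) ≤
      (∑ j ∈ Finset.range (Fintype.card V), (1 : ℚ) / ((j : ℚ) + 1)) *
        ((alphaVal V k : ℕ) : ℚ) := by
  classical
  obtain ⟨hchains, hdisj, hgr⟩ := hgreedy
  set H : ℕ → ℚ := fun n => ∑ j ∈ Finset.range n, (1:ℚ)/((j:ℚ)+1) with hH
  set α' : ℚ := ((alphaVal V k : ℕ) : ℚ) with hα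
  have hα0 : 0 ≤ α' := by positivity
  -- the remaining sets
  set Ufin : ℕ → Finset V :=
    fun i => Finset.univ.filter (fun v => ∀ j : Fin m, (j:ℕ) < i → v ∉ C j) with hUfin
  have hU0 : Ufin 0 = Finset.univ := by
    ext v; simp [hUfin]
  have hUm : Ufin m = Finset.univ \ Finset.univ.biUnion C := by
    ext v
    simp only [hUfin, Finset.mem_filter, Finset.mem_sdiff, Finset.mem_univ, true_and,
      Finset.mem_biUnion]
    push_neg
    exact ⟨fun hv j => hv j j.isLt, fun hv j _ => hv j⟩
  have hCsub : ∀ (i : ℕ) (hi : i < m), C ⟨i, hi⟩ ⊆ Ufin i := by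
    intro i hi v hv
    simp only [hUfin, Finset.mem_filter, Finset.mem_univ, true_and]
    intro j hj
    have hne : j ≠ ⟨i, hi⟩ := by
      intro h; rw [h] at hj; exact absurd hj (lt_irrefl i)
    exact Finset.disjoint_left.1 (hdisj ⟨i, hi⟩ j (Ne.symm hne)) hv
  have hUsucc : ∀ (i : ℕ) (hi : i < m), Ufin (i+1) = Ufin i \ C ⟨i, hi⟩ := by
    intro i hi
    ext v
    simp only [hUfin, Finset.mem_filter, Finset.mem_sdiff, Finset.mem_univ, true_and]
    constructor
    · intro hv
      exact ⟨fun j hj => hv j (by omega), hv ⟨i, hi⟩ (by simp)⟩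
    · rintro ⟨hv, hvi⟩ j hj
      rcases Nat.lt_succ_iff_lt_or_eq.1 hj with h | h
      · exact hv j h
      · have : j = ⟨i, hi⟩ := Fin.ext h
        rw [this]; exact hvi
  have hcard : ∀ (i : ℕ) (hi : i < m),
      (Ufin i).card = (Ufin (i+1)).card + (C ⟨i, hi⟩).card := by
    intro i hi
    rw [hUsucc i hi, Finset.card_sdiff_of_subset (hCsub i hi)]
    have := Finset.card_le_card (hCsub i hi)
    omega
  -- per-step Mirsky bound
  have hkey : ∀ (i : ℕ) (hi : i < m),
      k * (Ufin i).card ≤ (C ⟨i, hi⟩).card * alphaVal V k := by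
    intro i hi
    apply mirsky_bound (Ufin i) k _ hk (le_of_lt (hbig ⟨i, hi⟩))
    intro D hD hDsub
    apply hgr ⟨i, hi⟩ D hD
    intro v hv j hj
    have := hDsub hv
    simp only [hUfin, Finset.mem_filter] at this
    exact this.2 j hj
  -- final bound
  have hrem : (Ufin m).card ≤ alphaVal V k := by
    have := mirsky_bound (Ufin m) k k hk le_rfl (fun D hD hDsub => hstop D hD
      (fun v hv j => by
        have := hDsub hv
        simp only [hUfin, Finset.mem_filter] at this
        exact this.2 j j.isLt))
    exact Nat.le_of_mul_le_mul_left this hk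
  -- step inequality in ℚ
  have hstep : ∀ i ∈ Finset.range m,
      (k:ℚ) ≤ α' * (H (Ufin i).card - H (Ufin (i+1)).card) := by
    intro i hi
    rw [Finset.mem_range] at hi
    set b := (Ufin i).card with hb
    set a := (Ufin (i+1)).card with ha
    set ℓ := (C ⟨i, hi⟩).card with hℓ
    have hba : b = a + ℓ := hcard i hi
    have hℓb : ℓ ≤ b := by omega
    have hbpos : 0 < b := lt_of_lt_of_le (lt_trans hk (hbig ⟨i, hi⟩)) hℓb
    have hdiff : ((ℓ:ℕ):ℚ) / (b:ℚ) ≤ H b - H a := by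
      have := H_diff a b (by omega) hbpos
      have hsub : b - a = ℓ := by omega
      rwa [hsub] at this
    have hq : (k:ℚ) ≤ α' * ((ℓ:ℚ)/(b:ℚ)) := by
      rw [mul_div_assoc', le_div_iff₀ (by exact_mod_cast hbpos)]
      have := hkey i hi
      rw [← hb, ← hℓ] at this
      calc (k:ℚ) * b = ((k * b : ℕ) : ℚ) := by push_cast; ring
      _ ≤ ((ℓ * alphaVal V k : ℕ) : ℚ) := by exact_mod_cast this
      _ = α' * ℓ := by push_cast [hα]; ring
    exact hq.trans (mul_le_mul_of_nonneg_left hdiff hα0)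
  -- telescoping sum
  have htel : (k:ℚ) * m ≤ α' * (H (Ufin 0).card - H (Ufin m).card) := by
    have hsum := Finset.sum_le_sum hstep
    rw [Finset.sum_const, Finset.card_range, nsmul_eq_mul] at hsum
    have htele : ∑ i ∈ Finset.range m,
        (α' * (H (Ufin i).card - H (Ufin (i+1)).card)) =
        α' * (H (Ufin 0).card - H (Ufin m).card) := by
      rw [← Finset.mul_sum, Finset.sum_range_sub' (fun i => H (Ufin i).card)]
    rw [htele] at hsum
    calc (k:ℚ) * m = (m:ℚ) * (k:ℚ) := by ring
    _ ≤ _ := hsum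
  -- singleton part
  have hsing : ((Ufin m).card : ℚ) ≤ α' * H (Ufin m).card :=
    singletons_le _ _ (by rw [hα]; exact_mod_cast hrem)
  -- combine
  have hc0 : (Ufin 0).card = Fintype.card V := by rw [hU0, Finset.card_univ]
  have hfinal : ((Ufin m).card : ℚ) + (k:ℚ) * m ≤ α' * H (Fintype.card V) := by
    calc ((Ufin m).card : ℚ) + (k:ℚ) * m
        ≤ α' * H (Ufin m).card + α' * (H (Ufin 0).card - H (Ufin m).card) :=
          add_le_add hsing htel
    _ = α' * H (Ufin 0).card := by ring
    _ = α' * H (Fintype.card V) := by rw [hc0]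
  rw [← hUm]
  push_cast
  calc ((Ufin m).card : ℚ) + (k:ℚ) * (m:ℚ) ≤ α' * H (Fintype.card V) := hfinal
  _ = H (Fintype.card V) * α' := by ring
end AuxGreedyHarmonic
end

section
/- Let (V, ≤) be a finite partially ordered set and k a positive integer. Every greedy chain sequence C_1, …, C_k of length k satisfies |C_1 ∪ … ∪ C_k| ≥ (1 − (1 − 1/k)^k) · β_k ≥ (1 − 1/e) · β_k; that is, the first k greedy chains cover at least a (1 − 1/e) fraction of the maximum number of elements coverable by k chains. -/
/-- **Greedy maximum-coverage guarantee for chains.** Every greedy chain sequence of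
length `k` covers at least a `(1 - (1 - 1/k)^k) ≥ (1 - 1/e)` fraction of `β_k`. -/
theorem greedy_chains_coverage_guarantee (V : Type) [Fintype V] [DecidableEq V]
    [PartialOrder V] (k : ℕ) (hk : 0 < k) (C : Fin k → Finset V)
    (hgreedy : GreedyChainSeq V C) :
    (1 - (1 - 1 / (k : ℝ)) ^ k) * (betaVal V k : ℝ) ≤
        ((Finset.univ.biUnion C).card : ℝ) ∧
    (1 - 1 / Real.exp 1) * (betaVal V k : ℝ) ≤
        (1 - (1 - 1 / (k : ℝ)) ^ k) * (betaVal V k : ℝ) := by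
  obtain ⟨hchain, hdisj, hmax⟩ := hgreedy
  have hkR : (1:ℝ) ≤ (k:ℝ) := by exact_mod_cast hk
  have hk0 : (k:ℝ) ≠ 0 := by positivity
  have h1k : (0:ℝ) ≤ 1 - 1/(k:ℝ) := by
    have : 1/(k:ℝ) ≤ 1 := by
      rw [div_le_one (by linarith)]; exact hkR
    linarith
  -- β is attained
  have hβmem : betaVal V k ∈ {n : ℕ | ∃ D : Fin k → Finset V,
      (∀ i, IsChain (· ≤ ·) ((D i : Finset V) : Set V)) ∧
      (∀ i j, i ≠ j → Disjoint (D i) (D j)) ∧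
      n = (Finset.univ.biUnion D).card} := by
    apply Nat.sSup_mem
    · exact ⟨(Finset.univ.biUnion (fun _ : Fin k => (∅ : Finset V))).card,
        fun _ => ∅, by simp [Set.subsingleton_empty.isChain], by simp, rfl⟩
    · refine ⟨Fintype.card V, ?_⟩
      rintro n ⟨D, -, -, rfl⟩
      exact Finset.card_le_univ _
  obtain ⟨D, hDchain, hDdisj, hDcard⟩ := hβmem
  set β : ℕ := betaVal V k with hβ
  -- partial unions
  set U : ℕ → Finset V := fun i =>
    (Finset.univ.filter fun j : Fin k => (j : ℕ) < i).biUnion C with hU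
  have hUmem : ∀ (i : ℕ) (v : V), v ∈ U i ↔ ∃ j : Fin k, (j:ℕ) < i ∧ v ∈ C j := by
    intro i v
    simp [hU, Finset.mem_biUnion, Finset.mem_filter, and_comm]
  -- step: main inequality β ≤ |U i| + k * |C i|
  have hmain : ∀ i : Fin k, β ≤ (U (i:ℕ)).card + k * (C i).card := by
    intro i
    have hsub : Finset.univ.biUnion D \ U (i:ℕ) ⊆
        Finset.univ.biUnion (fun j => D j \ U (i:ℕ)) := by
      intro v hv
      rw [Finset.mem_sdiff] at hv
      rcases Finset.mem_biUnion.1 hv.1 with ⟨j, -, hj⟩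
      exact Finset.mem_biUnion.2 ⟨j, Finset.mem_univ _, Finset.mem_sdiff.2 ⟨hj, hv.2⟩⟩
    have hterm : ∀ j : Fin k, (D j \ U (i:ℕ)).card ≤ (C i).card := by
      intro j
      apply hmax i
      · exact (hDchain j).mono (by
          intro v hv
          simp only [Finset.coe_sdiff, Set.mem_diff] at hv
          exact hv.1)
      · intro v hv j' hj'
        have hvn : v ∉ U (i:ℕ) := (Finset.mem_sdiff.1 hv).2
        intro hvc
        exact hvn ((hUmem _ _).2 ⟨j', hj', hvc⟩)
    calc β = (Finset.univ.biUnion D).card := hDcard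
      _ ≤ (Finset.univ.biUnion D \ U (i:ℕ)).card + (U (i:ℕ)).card :=
          Finset.card_le_card_sdiff_add_card
      _ ≤ (Finset.univ.biUnion (fun j => D j \ U (i:ℕ))).card + (U (i:ℕ)).card :=
          Nat.add_le_add_right (Finset.card_le_card hsub) _
      _ ≤ (∑ j : Fin k, (D j \ U (i:ℕ)).card) + (U (i:ℕ)).card :=
          Nat.add_le_add_right Finset.card_biUnion_le _
      _ ≤ (∑ _j : Fin k, (C i).card) + (U (i:ℕ)).card :=
          Nat.add_le_add_right (Finset.sum_le_sum fun j _ => hterm j) _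
      _ = (U (i:ℕ)).card + k * (C i).card := by
          simp [Finset.sum_const, Finset.card_univ, Nat.add_comm, Nat.mul_comm]
  -- step: |U (i+1)| = |U i| + |C i|
  have hstep : ∀ i : Fin k, (U ((i:ℕ)+1)).card = (U (i:ℕ)).card + (C i).card := by
    intro i
    have heq : U ((i:ℕ)+1) = U (i:ℕ) ∪ C i := by
      ext v
      rw [Finset.mem_union, hUmem, hUmem]
      constructor
      · rintro ⟨j, hj, hv⟩
        rcases Nat.lt_succ_iff_lt_or_eq.1 hj with h | h
        · exact Or.inl ⟨j, h, hv⟩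
        · exact Or.inr (by rwa [show j = i from Fin.ext h] at hv)
      · rintro (⟨j, hj, hv⟩ | hv)
        · exact ⟨j, Nat.lt_succ_of_lt hj, hv⟩
        · exact ⟨i, Nat.lt_succ_self _, hv⟩
    have hd : Disjoint (U (i:ℕ)) (C i) := by
      rw [Finset.disjoint_left]
      intro v hv hvc
      rcases (hUmem _ _).1 hv with ⟨j, hj, hvj⟩
      have : j ≠ i := fun h => absurd (h ▸ hj) (lt_irrefl _)
      exact (Finset.disjoint_left.1 (hdisj j i this)) hvj hvc
    rw [heq, Finset.card_union_of_disjoint hd]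
  -- iterate
  have hiter : ∀ i : ℕ, i ≤ k →
      (β:ℝ) - (U i).card ≤ (β:ℝ) * (1 - 1/(k:ℝ)) ^ i := by
    intro i
    induction i with
    | zero =>
      intro _
      have : U 0 = ∅ := by
        ext v; rw [hUmem]; simp
      simp [this]
    | succ n ih =>
      intro hn
      have hnk : n < k := hn
      have ih' := ih (Nat.le_of_lt hnk)
      set fi : Fin k := ⟨n, hnk⟩ with hfi
      have h1 : (β:ℝ) ≤ (U n).card + k * (C fi).card := by exact_mod_cast hmain fi
      have h2 : ((U (n+1)).card : ℝ) = (U n).card + (C fi).card := by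
        exact_mod_cast hstep fi
      have h3 : ((β:ℝ) - (U n).card) / k ≤ (C fi).card := by
        rw [div_le_iff₀ (by linarith)]
        nlinarith [(C fi).card.cast_nonneg (α := ℝ)]
      have h4 : (β:ℝ) - (U (n+1)).card ≤ ((β:ℝ) - (U n).card) * (1 - 1/(k:ℝ)) := by
        rw [h2]
        have : ((β:ℝ) - (U n).card) * (1 - 1/(k:ℝ)) =
            ((β:ℝ) - (U n).card) - ((β:ℝ) - (U n).card)/k := by
          field_simp
        rw [this]; linarith
      calc (β:ℝ) - (U (n+1)).card ≤ ((β:ℝ) - (U n).card) * (1 - 1/(k:ℝ)) := h4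
        _ ≤ ((β:ℝ) * (1 - 1/(k:ℝ)) ^ n) * (1 - 1/(k:ℝ)) :=
            mul_le_mul_of_nonneg_right ih' h1k
        _ = (β:ℝ) * (1 - 1/(k:ℝ)) ^ (n+1) := by ring
  have hUk : U k = Finset.univ.biUnion C := by
    ext v
    rw [hUmem, Finset.mem_biUnion]
    constructor
    · rintro ⟨j, -, hv⟩; exact ⟨j, Finset.mem_univ _, hv⟩
    · rintro ⟨j, -, hv⟩; exact ⟨j, j.isLt, hv⟩
  have hfinal : (β:ℝ) - ((Finset.univ.biUnion C).card : ℝ) ≤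
      (β:ℝ) * (1 - 1/(k:ℝ)) ^ k := by
    rw [← hUk]; exact hiter k le_rfl
  constructor
  · linarith
  · have hexp : (1 - 1/(k:ℝ)) ^ k ≤ 1 / Real.exp 1 := by
      have h1 : (1 - 1/(k:ℝ)) ≤ Real.exp (-(1/(k:ℝ))) := by
        have := Real.add_one_le_exp (-(1/(k:ℝ)))
        linarith
      calc (1 - 1/(k:ℝ)) ^ k ≤ (Real.exp (-(1/(k:ℝ)))) ^ k :=
            pow_le_pow_left₀ h1k h1 k
        _ = Real.exp ((k:ℝ) * (-(1/(k:ℝ)))) := by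
            rw [← Real.exp_nat_mul]
        _ = Real.exp (-1) := by
            congr 1; field_simp
        _ = 1 / Real.exp 1 := by
            rw [Real.exp_neg]; exact (one_div _).symm
    apply mul_le_mul_of_nonneg_right _ (Nat.cast_nonneg β)
    linarith
end
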